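/- arXiv:2205.03496 — 3 statements merged into one kernel-verified Lean document; each statement's English description precedes it below -/
import Mathlib

section
/- For any pairwise distinct j, k, l ∈ {0, 1, …, 2d+1}, the only (x, y, z) ∈ ℂ³ with R_j(x,y,z) = R_k(x,y,z) = R_l(x,y,z) = 0 is (0, 0, 0); that is, no three of the 2d+2 lines {R_k = 0} in ℙ² are concurrent, so the lines are in general position. -/
/-- The linear form `R_k(x,y,z) = (2d+1-k)x + ky - k(2d+1-k)z`, evaluated at `(x,y,z) ∈ ℂ³`. -/
noncomputable def Rf (d k : ℕ) (x y z : ℂ) : ℂ :=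
  (2*(d:ℂ)+1-(k:ℂ))*x + (k:ℂ)*y - (k:ℂ)*(2*(d:ℂ)+1-(k:ℂ))*z

/-- For pairwise distinct `j, k, l ∈ {0, …, 2d+1}`, the only common zero in `ℂ³` of
`R_j, R_k, R_l` is the origin: no three of the `2d+2` lines in `ℙ²` are concurrent. -/
theorem stmt1 (d : ℕ) (hd : 1 ≤ d) (j k l : ℕ)
    (hj : j ≤ 2*d+1) (hk : k ≤ 2*d+1) (hl : l ≤ 2*d+1)
    (hjk : j ≠ k) (hjl : j ≠ l) (hkl : k ≠ l) :
    ∀ x y z : ℂ, Rf d j x y z = 0 → Rf d k x y z = 0 → Rf d l x y z = 0 →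
      x = 0 ∧ y = 0 ∧ z = 0 := by
  intro x y z h1 h2 h3
  simp only [Rf] at h1 h2 h3
  have cjk : (j:ℂ) ≠ (k:ℂ) := by exact_mod_cast hjk
  have cjl : (j:ℂ) ≠ (l:ℂ) := by exact_mod_cast hjl
  have ckl : (k:ℂ) ≠ (l:ℂ) := by exact_mod_cast hkl
  have hN : (2*(d:ℂ)+1) ≠ 0 := by
    have : ((2*d+1 : ℕ):ℂ) ≠ 0 := Nat.cast_ne_zero.mpr (by omega)
    push_cast at this
    exact this
  have key : ((k:ℂ)-j)*(((l:ℂ)-j)*(((l:ℂ)-k)*z)) = 0 := by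
    linear_combination ((l:ℂ)-j)*(h1-h2) - ((k:ℂ)-j)*(h1-h3)
  have hz : z = 0 := by
    rcases mul_eq_zero.mp key with h | h
    · exact absurd (sub_eq_zero.mp h) (Ne.symm cjk)
    rcases mul_eq_zero.mp h with h | h
    · exact absurd (sub_eq_zero.mp h) (Ne.symm cjl)
    rcases mul_eq_zero.mp h with h | h
    · exact absurd (sub_eq_zero.mp h) (Ne.symm ckl)
    · exact h
  have hxy : ((k:ℂ)-j)*(x-y) = 0 := by
    linear_combination (h1 - h2) - ((k:ℂ)-j)*(2*(d:ℂ)+1-j-k)*hz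
  have hxy' : x = y := by
    rcases mul_eq_zero.mp hxy with h | h
    · exact absurd (sub_eq_zero.mp h) (Ne.symm cjk)
    · exact sub_eq_zero.mp h
  have hx : (2*(d:ℂ)+1)*x = 0 := by
    linear_combination h1 + (j:ℂ)*(2*(d:ℂ)+1-j)*hz + (j:ℂ)*hxy'
  have hx0 : x = 0 := by
    rcases mul_eq_zero.mp hx with h | h
    · exact absurd h hN
    · exact h
  exact ⟨hx0, hxy' ▸ hx0, hz⟩
end

section
/- The set of common zeros {(x, y) ∈ ℂ² : p(x,y) = 0 and q(x,y) = 0} is exactly { ( jk/(2d+1), (2d+1−j)(2d+1−k)/(2d+1) ) : 0 ≤ j ≤ d < k ≤ 2d+1 } and has exactly (d+1)² elements; moreover, every common zero (x, y, z) ∈ ℂ³ \ {0} of P and Q satisfies z ≠ 0. (These are the indeterminacy points of F, and they all lie in the affine chart z = 1.) -/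
/-- `P = ∏_{k=0}^{d} R_k`, evaluated at `(x,y,z)`. -/
noncomputable def Pf (d : ℕ) (x y z : ℂ) : ℂ :=
  ∏ k ∈ Finset.range (d+1), Rf d k x y z

/-- `Q = ∏_{k=d+1}^{2d+1} R_k`, evaluated at `(x,y,z)`. -/
noncomputable def Qf (d : ℕ) (x y z : ℂ) : ℂ :=
  ∏ k ∈ Finset.Icc (d+1) (2*d+1), Rf d k x y z

/-- The intersection point `( jk/(2d+1), (2d+1-j)(2d+1-k)/(2d+1) ) ∈ ℂ²`. -/
noncomputable def interPt (d j k : ℕ) : ℂ × ℂ :=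
  ((j:ℂ)*(k:ℂ)/(2*(d:ℂ)+1),
   (2*(d:ℂ)+1-(j:ℂ))*(2*(d:ℂ)+1-(k:ℂ))/(2*(d:ℂ)+1))

private lemma hNne (d : ℕ) : (2*(d:ℂ)+1) ≠ 0 := by
  intro h
  have h2 : ((2*d+1 : ℕ) : ℂ) = 0 := by push_cast; linear_combination h
  have := Nat.cast_eq_zero.mp h2
  omega

private lemma cast_sub_ne (j k : ℕ) (h : j < k) : (k:ℂ) - (j:ℂ) ≠ 0 := by
  intro h0
  have hjk : (j:ℂ) = (k:ℂ) := by linear_combination -h0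
  have := Nat.cast_injective hjk
  omega

private lemma solve_xy (d j k : ℕ) (hj : j ≤ d) (hk1 : d < k) (x y : ℂ)
    (e1 : Rf d j x y 1 = 0) (e2 : Rf d k x y 1 = 0) :
    (x, y) = interPt d j k := by
  have hN := hNne d
  have hjk := cast_sub_ne j k (lt_of_le_of_lt hj hk1)
  unfold Rf at e1 e2
  have hx : ((k:ℂ)-(j:ℂ)) * ((2*(d:ℂ)+1) * x - (j:ℂ)*(k:ℂ)) = 0 := by
    linear_combination (k:ℂ) * e1 - (j:ℂ) * e2
  have hy : ((k:ℂ)-(j:ℂ)) * ((2*(d:ℂ)+1) * y - (2*(d:ℂ)+1-(j:ℂ))*(2*(d:ℂ)+1-(k:ℂ))) = 0 := by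
    linear_combination (2*(d:ℂ)+1-(j:ℂ)) * e2 - (2*(d:ℂ)+1-(k:ℂ)) * e1
  rcases mul_eq_zero.mp hx with h | h
  · exact absurd h hjk
  rcases mul_eq_zero.mp hy with h' | h'
  · exact absurd h' hjk
  have hx' : x = (j:ℂ)*(k:ℂ)/(2*(d:ℂ)+1) := by
    field_simp
    linear_combination h
  have hy' : y = (2*(d:ℂ)+1-(j:ℂ))*(2*(d:ℂ)+1-(k:ℂ))/(2*(d:ℂ)+1) := by
    field_simp
    linear_combination h'
  simp [interPt, hx', hy']

private lemma line_vanish_j (d j k : ℕ) :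
    Rf d j (interPt d j k).1 (interPt d j k).2 1 = 0 := by
  have hN := hNne d
  simp only [Rf, interPt]
  field_simp
  ring

private lemma line_vanish_k (d j k : ℕ) :
    Rf d k (interPt d j k).1 (interPt d j k).2 1 = 0 := by
  have hN := hNne d
  simp only [Rf, interPt]
  field_simp
  ring

private lemma inter_inj (d j k j' k' : ℕ) (hj : j ≤ d) (_hk : d < k)
    (_hj' : j' ≤ d) (hk' : d < k') (heq : interPt d j k = interPt d j' k') :
    j = j' ∧ k = k' := by
  have hN := hNne d
  have h1 : (j:ℂ)*(k:ℂ)/(2*(d:ℂ)+1) = (j':ℂ)*(k':ℂ)/(2*(d:ℂ)+1) :=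
    congrArg Prod.fst heq
  have h2 : (2*(d:ℂ)+1-(j:ℂ))*(2*(d:ℂ)+1-(k:ℂ))/(2*(d:ℂ)+1)
      = (2*(d:ℂ)+1-(j':ℂ))*(2*(d:ℂ)+1-(k':ℂ))/(2*(d:ℂ)+1) :=
    congrArg Prod.snd heq
  have hp : (j:ℂ)*(k:ℂ) = (j':ℂ)*(k':ℂ) := by
    field_simp at h1; exact h1
  have hpn : j*k = j'*k' := by exact_mod_cast hp
  field_simp at h2
  have hsC : (2*(d:ℂ)+1) * ((j:ℂ)+(k:ℂ)) = (2*(d:ℂ)+1) * ((j':ℂ)+(k':ℂ)) := by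
    linear_combination hp - h2
  have hsC' : (j:ℂ)+(k:ℂ) = (j':ℂ)+(k':ℂ) := mul_left_cancel₀ hN hsC
  have hsn : j + k = j' + k' := by exact_mod_cast hsC'
  have hpz : (j:ℤ)*(k:ℤ) = (j':ℤ)*(k':ℤ) := by exact_mod_cast hpn
  have hsz : (j:ℤ)+(k:ℤ) = (j':ℤ)+(k':ℤ) := by exact_mod_cast hsn
  have hkey : ((j:ℤ) - (j':ℤ)) * ((k:ℤ) - (j':ℤ)) = 0 := by
    linear_combination hpz - (j':ℤ) * hsz
  rcases mul_eq_zero.mp hkey with h | h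
  · have hjj : j = j' := by omega
    exact ⟨hjj, by omega⟩
  · exfalso; omega

/-- The common zero set `{p = q = 0} ⊂ ℂ²` is exactly the set of intersection points
`interPt d j k` for `0 ≤ j ≤ d < k ≤ 2d+1`; it has exactly `(d+1)²` elements; and every
common zero `(x,y,z) ≠ 0` of the homogeneous polynomials `P` and `Q` has `z ≠ 0`. -/
theorem stmt3 (d : ℕ) (hd : 1 ≤ d) :
    ({v : ℂ × ℂ | Pf d v.1 v.2 1 = 0 ∧ Qf d v.1 v.2 1 = 0}
        = {v : ℂ × ℂ | ∃ j k : ℕ, j ≤ d ∧ d < k ∧ k ≤ 2*d+1 ∧ v = interPt d j k}) ∧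
    ({v : ℂ × ℂ | Pf d v.1 v.2 1 = 0 ∧ Qf d v.1 v.2 1 = 0}.ncard = (d+1)^2) ∧
    (∀ x y z : ℂ, ¬(x = 0 ∧ y = 0 ∧ z = 0) →
      Pf d x y z = 0 → Qf d x y z = 0 → z ≠ 0) := by
  have hN := hNne d
  -- set equality
  have hset : {v : ℂ × ℂ | Pf d v.1 v.2 1 = 0 ∧ Qf d v.1 v.2 1 = 0}
      = {v : ℂ × ℂ | ∃ j k : ℕ, j ≤ d ∧ d < k ∧ k ≤ 2*d+1 ∧ v = interPt d j k} := by
    ext v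
    simp only [Set.mem_setOf_eq]
    constructor
    · rintro ⟨hP, hQ⟩
      rw [Pf, Finset.prod_eq_zero_iff] at hP
      rw [Qf, Finset.prod_eq_zero_iff] at hQ
      obtain ⟨j, hjm, hje⟩ := hP
      obtain ⟨k, hkm, hke⟩ := hQ
      rw [Finset.mem_range] at hjm
      rw [Finset.mem_Icc] at hkm
      refine ⟨j, k, by omega, by omega, by omega, ?_⟩
      have := solve_xy d j k (by omega) (by omega) v.1 v.2 hje hke
      rw [← this]
    · rintro ⟨j, k, hj, hk1, hk2, rfl⟩
      constructor
      · exact Finset.prod_eq_zero (Finset.mem_range.mpr (by omega)) (line_vanish_j d j k)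
      · exact Finset.prod_eq_zero (Finset.mem_Icc.mpr (by omega)) (line_vanish_k d j k)
    -- cardinality
  refine ⟨hset, ?_, ?_⟩
  · rw [hset]
    have himg : {v : ℂ × ℂ | ∃ j k : ℕ, j ≤ d ∧ d < k ∧ k ≤ 2*d+1 ∧ v = interPt d j k}
        = ↑(Finset.image (fun p : ℕ × ℕ => interPt d p.1 p.2)
            ((Finset.range (d+1)) ×ˢ (Finset.Icc (d+1) (2*d+1)))) := by
      ext v
      simp only [Set.mem_setOf_eq, Finset.coe_image, Set.mem_image, Finset.mem_coe,
        Finset.mem_product, Finset.mem_range, Finset.mem_Icc]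
      constructor
      · rintro ⟨j, k, hj, hk1, hk2, rfl⟩
        exact ⟨(j, k), ⟨by omega, by omega, by omega⟩, rfl⟩
      · rintro ⟨⟨j, k⟩, ⟨h1, h2, h3⟩, rfl⟩
        exact ⟨j, k, by omega, by omega, by omega, rfl⟩
    rw [himg, Set.ncard_coe_finset]
    rw [Finset.card_image_of_injOn, Finset.card_product, Finset.card_range, Nat.card_Icc]
    · have h : 2*d+1+1-(d+1) = d+1 := by omega
      rw [h]; ring
    · rintro ⟨j, k⟩ hm ⟨j', k'⟩ hm' heq
      simp only [Finset.coe_product, Set.mem_prod, Finset.mem_coe, Finset.mem_range,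
        Finset.mem_Icc] at hm hm'
      have := inter_inj d j k j' k' (by omega) (by omega) (by omega) (by omega) heq
      simp [Prod.ext_iff, this.1, this.2]
  · intro x y z hne hP hQ hz
    subst hz
    rw [Pf, Finset.prod_eq_zero_iff] at hP
    rw [Qf, Finset.prod_eq_zero_iff] at hQ
    obtain ⟨j, hjm, hje⟩ := hP
    obtain ⟨k, hkm, hke⟩ := hQ
    rw [Finset.mem_range] at hjm
    rw [Finset.mem_Icc] at hkm
    have hjk := cast_sub_ne j k (by omega)
    unfold Rf at hje hke
    have hx : ((k:ℂ)-(j:ℂ)) * ((2*(d:ℂ)+1) * x) = 0 := by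
      linear_combination (k:ℂ) * hje - (j:ℂ) * hke
    have hy : ((k:ℂ)-(j:ℂ)) * ((2*(d:ℂ)+1) * y) = 0 := by
      linear_combination (2*(d:ℂ)+1-(j:ℂ)) * hke - (2*(d:ℂ)+1-(k:ℂ)) * hje
    have hx0 : x = 0 := by
      rcases mul_eq_zero.mp hx with h | h
      · exact absurd h hjk
      · rcases mul_eq_zero.mp h with h' | h'
        · exact absurd h' hN
        · exact h'
    have hy0 : y = 0 := by
      rcases mul_eq_zero.mp hy with h | h
      · exact absurd h hjk
      · rcases mul_eq_zero.mp h with h' | h'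
        · exact absurd h' hN
        · exact h'
    exact hne ⟨hx0, hy0, rfl⟩
end

section
/- Let f ∈ ℝ[x,y] be a polynomial and let U be a bounded connected component of the open set {(x,y) ∈ ℝ² : f(x,y) ≠ 0}. Then there exists a point (x₀, y₀) ∈ U with ∂f/∂x(x₀,y₀) = 0 and ∂f/∂y(x₀,y₀) = 0; that is, every relatively compact component of the complement of the real curve {f = 0} contains a critical point of f. -/
open MvPolynomial

lemma derivFst (f : MvPolynomial (Fin 2) ℝ) (y x : ℝ) :
    HasDerivAt (fun x => eval ![x, y] f) (eval ![x, y] (pderiv 0 f)) x := by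
  induction f using MvPolynomial.induction_on with
  | C a => simpa using hasDerivAt_const x a
  | add p q hp hq => simpa [map_add] using hp.fun_add hq
  | mul_X p i hp =>
    fin_cases i
    · simpa [pderiv_mul, mul_comm, add_comm] using hp.fun_mul (hasDerivAt_id x)
    · simpa [pderiv_mul, mul_comm] using hp.mul_const y

lemma derivSnd (f : MvPolynomial (Fin 2) ℝ) (x y : ℝ) :
    HasDerivAt (fun y => eval ![x, y] f) (eval ![x, y] (pderiv 1 f)) y := by
  induction f using MvPolynomial.induction_on with
  | C a => simpa using hasDerivAt_const y a
  | add p q hp hq => simpa [map_add] using hp.fun_add hq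
  | mul_X p i hp =>
    fin_cases i
    · simpa [pderiv_mul, mul_comm] using hp.mul_const x
    · simpa [pderiv_mul, mul_comm, add_comm] using hp.fun_mul (hasDerivAt_id y)

lemma contg (f : MvPolynomial (Fin 2) ℝ) :
    Continuous (fun w : ℝ × ℝ => eval ![w.1, w.2] f) := by
  apply (f.continuous_eval).comp
  apply continuous_pi
  intro i
  fin_cases i
  · exact continuous_fst
  · exact continuous_snd

/-- Every bounded (relatively compact) connected component `U` of the complement
`{f ≠ 0}` of the real curve `{f = 0}` of a real polynomial `f ∈ ℝ[x,y]` contains a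
critical point of `f`. -/
theorem stmt13 (f : MvPolynomial (Fin 2) ℝ) (U : Set (ℝ × ℝ))
    (hU : ∃ v ∈ {w : ℝ × ℝ | eval ![w.1, w.2] f ≠ 0},
      U = connectedComponentIn {w : ℝ × ℝ | eval ![w.1, w.2] f ≠ 0} v)
    (hb : Bornology.IsBounded U) :
    ∃ v ∈ U, eval ![v.1, v.2] (pderiv 0 f) = 0 ∧ eval ![v.1, v.2] (pderiv 1 f) = 0 := by
  set g : ℝ × ℝ → ℝ := fun w => eval ![w.1, w.2] f with hg
  set S : Set (ℝ × ℝ) := {w : ℝ × ℝ | eval ![w.1, w.2] f ≠ 0} with hS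
  obtain ⟨v0, hv0, rfl⟩ := hU
  have hgc : Continuous g := contg f
  have hSopen : IsOpen S := by
    have : S = g ⁻¹' ({0}ᶜ) := rfl
    rw [this]
    exact (isOpen_compl_singleton).preimage hgc
  have hUopen : IsOpen (connectedComponentIn S v0) := hSopen.connectedComponentIn
  set U := connectedComponentIn S v0 with hUdef
  have hUconn : IsPreconnected U := isPreconnected_connectedComponentIn
  have hv0U : v0 ∈ U := mem_connectedComponentIn hv0
  have hUS : U ⊆ S := connectedComponentIn_subset _ _
  have hK : IsCompact (closure U) :=
    Metric.isCompact_of_isClosed_isBounded isClosed_closure hb.closure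
  -- g vanishes on the frontier
  have hfr : ∀ w ∈ closure U, w ∉ U → g w = 0 := by
    intro w hwcl hwU
    by_contra hne
    have hwS : w ∈ S := hne
    have hins : IsPreconnected (insert w U) :=
      hUconn.subset_closure (Set.subset_insert _ _)
        (Set.insert_subset hwcl subset_closure)
    have hsub : insert w U ⊆ connectedComponentIn S w :=
      hins.subset_connectedComponentIn (Set.mem_insert _ _)
        (Set.insert_subset hwS hUS)
    have hv0' : v0 ∈ connectedComponentIn S w :=
      hsub (Set.mem_insert_of_mem _ hv0U)
    have : connectedComponentIn S w = U := by
      rw [hUdef]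
      exact connectedComponentIn_eq hv0'
    exact hwU (this ▸ mem_connectedComponentIn hwS)
  have hconcl : ∀ v : ℝ × ℝ, v ∈ U → (IsLocalMax g v ∨ IsLocalMin g v) →
      eval ![v.1, v.2] (pderiv 0 f) = 0 ∧ eval ![v.1, v.2] (pderiv 1 f) = 0 := by
    intro v hvU hext
    have h1 : Filter.Tendsto (fun x : ℝ => ((x, v.2) : ℝ × ℝ)) (nhds v.1) (nhds v) := by
      exact (Continuous.prodMk_left v.2).continuousAt
    have h2 : Filter.Tendsto (fun y : ℝ => ((v.1, y) : ℝ × ℝ)) (nhds v.2) (nhds v) := by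
      exact (Continuous.prodMk_right v.1).continuousAt
    rcases hext with hlm | hlm
    · constructor
      · exact IsLocalMax.hasDerivAt_eq_zero (h1.eventually hlm) (derivFst f v.2 v.1)
      · exact IsLocalMax.hasDerivAt_eq_zero (h2.eventually hlm) (derivSnd f v.1 v.2)
    · have e1 : IsLocalMin (fun x => eval ![x, v.2] f) v.1 := h1.eventually hlm
      have e2 : IsLocalMin (fun y => eval ![v.1, y] f) v.2 := h2.eventually hlm
      exact ⟨e1.hasDerivAt_eq_zero (derivFst f v.2 v.1),
        e2.hasDerivAt_eq_zero (derivSnd f v.1 v.2)⟩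
  have hne : (closure U).Nonempty := ⟨v0, subset_closure hv0U⟩
  have hgv0 : g v0 ≠ 0 := hv0
  rcases hgv0.lt_or_gt with hneg | hpos
  · -- g v0 < 0 : take min
    obtain ⟨vm, hvmcl, hmin⟩ := hK.exists_isMinOn hne hgc.continuousOn
    have hgvm : g vm < 0 := lt_of_le_of_lt (hmin (subset_closure hv0U)) hneg
    have hvmU : vm ∈ U := by
      by_contra h
      exact absurd (hfr vm hvmcl h) (ne_of_lt hgvm)
    have hloc : IsLocalMin g vm :=
      hmin.isLocalMin (mem_nhds_iff.mpr ⟨U, subset_closure, hUopen, hvmU⟩)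
    exact ⟨vm, hvmU, hconcl vm hvmU (Or.inr hloc)⟩
  · obtain ⟨vm, hvmcl, hmax⟩ := hK.exists_isMaxOn hne hgc.continuousOn
    have hgvm : 0 < g vm := lt_of_lt_of_le hpos (hmax (subset_closure hv0U))
    have hvmU : vm ∈ U := by
      by_contra h
      exact absurd (hfr vm hvmcl h) (ne_of_gt hgvm)
    have hloc : IsLocalMax g vm :=
      hmax.isLocalMax (mem_nhds_iff.mpr ⟨U, subset_closure, hUopen, hvmU⟩)
    exact ⟨vm, hvmU, hconcl vm hvmU (Or.inl hloc)⟩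
end
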